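/- (Scalar case p = 1 of Theorem 2.4, k = 2.) Let (X₁, X₂) have joint density on (0,∞)² proportional to x₁^{α₁−1} x₂^{α₂−1} (1+x₂)^{β₁} (1+x₁+x₂)^{−(α₁+α₂+α₃+β₁+β₂)}. Then U₁ = (1+X₂)/X₁ and U₂ = 1/X₂ are independent type-2 beta random variables, with U₁ having density proportional to u^{a₁−1}(1+u)^{−(a₁+α₁)} for a₁ = α₂+α₃+β₁+β₂, and U₂ having density proportional to u^{a₂−1}(1+u)^{−(a₂+α₂)} for a₂ = α₃+β₂. -/

import Mathlib

open MeasureTheory Real Set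

/-- The type-2 beta (beta prime) distribution with parameters (a,b) on (0,∞). -/
noncomputable def betaPrimeMeasure (a b : ℝ) : Measure ℝ :=
  volume.withDensity fun u => ENNReal.ofReal
    ((Ioi (0 : ℝ)).indicator
      (fun u => u ^ (a - 1) * (1 + u) ^ (-(a + b)) / (Gamma a * Gamma b / Gamma (a + b))) u)

lemma complex_beta_pointwise {a b x : ℝ} (hx0 : 0 ≤ x) (hx1 : x ≤ 1) :
    (x : ℂ) ^ ((a : ℂ) - 1) * (1 - (x : ℂ)) ^ ((b : ℂ) - 1)
      = ((x ^ (a - 1) * (1 - x) ^ (b - 1) : ℝ) : ℂ) := by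
  rw [show ((a:ℂ)-1) = ((a-1:ℝ):ℂ) by push_cast; ring,
    show ((b:ℂ)-1) = ((b-1:ℝ):ℂ) by push_cast; ring,
    show (1 - (x:ℂ)) = ((1-x:ℝ):ℂ) by push_cast; ring,
    ← Complex.ofReal_cpow hx0, ← Complex.ofReal_cpow (by linarith : (0:ℝ) ≤ 1 - x),
    ← Complex.ofReal_mul]

lemma betaReal_integrable {a b : ℝ} (ha : 0 < a) (hb : 0 < b) :
    IntegrableOn (fun x : ℝ => x ^ (a - 1) * (1 - x) ^ (b - 1)) (Ioo 0 1) := by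
  have h := (Complex.betaIntegral_convergent (u := (a : ℂ)) (v := (b : ℂ))
    (by simpa using ha) (by simpa using hb))
  rw [intervalIntegrable_iff_integrableOn_Ioc_of_le zero_le_one] at h
  have h2 : IntegrableOn (fun x : ℝ =>
      ((x : ℂ) ^ ((a : ℂ) - 1) * (1 - (x : ℂ)) ^ ((b : ℂ) - 1)).re) (Ioc 0 1) := h.re
  refine (h2.mono_set Ioo_subset_Ioc_self).congr_fun (fun x hx => ?_) measurableSet_Ioo
  dsimp only
  rw [complex_beta_pointwise hx.1.le hx.2.le, Complex.ofReal_re]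

lemma betaReal_value {a b : ℝ} (ha : 0 < a) (hb : 0 < b) :
    ∫ x in Ioo (0:ℝ) 1, x ^ (a - 1) * (1 - x) ^ (b - 1)
      = Gamma a * Gamma b / Gamma (a + b) := by
  have key := Complex.Gamma_mul_Gamma_eq_betaIntegral (s := (a : ℂ)) (t := (b : ℂ))
    (by simpa using ha) (by simpa using hb)
  have hB : Complex.betaIntegral (a : ℂ) (b : ℂ)
      = ((∫ x in Ioo (0:ℝ) 1, x ^ (a - 1) * (1 - x) ^ (b - 1) : ℝ) : ℂ) := by
    rw [Complex.betaIntegral]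
    rw [intervalIntegral.integral_of_le zero_le_one, ← integral_Ioc_eq_integral_Ioo]
    have h := integral_ofReal (𝕜 := ℂ) (f := fun t : ℝ => t ^ (a-1)*(1-t)^(b-1))
      (μ := volume.restrict (Ioc 0 1))
    refine Eq.trans (setIntegral_congr_fun measurableSet_Ioc
      fun x hx => complex_beta_pointwise hx.1.le hx.2) ?_
    exact h
  rw [hB, Complex.Gamma_ofReal, Complex.Gamma_ofReal, show ((a:ℂ)+(b:ℂ)) = ((a+b:ℝ):ℂ) by push_cast; ring,
    Complex.Gamma_ofReal, ← Complex.ofReal_mul, ← Complex.ofReal_mul] at key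
  have := Complex.ofReal_inj.mp key
  have hG : Gamma (a + b) ≠ 0 := (Gamma_pos_of_pos (by linarith)).ne'
  field_simp
  linarith [this]

lemma key1 {x a b : ℝ} (hx : 0 < x) (hx1 : x < 1) :
    |1/(1-x)^2| * ((x/(1-x)) ^ (a-1) * (1 + x/(1-x)) ^ (-(a+b))) = x^(a-1) * (1-x)^(b-1) := by
  have h1 : 0 < 1 - x := by linarith
  have h2 : (1:ℝ) + x/(1-x) = 1/(1-x) := by field_simp; ring
  have E : ∀ (t y : ℝ), 0 < t → t ^ y = exp (log t * y) := fun t y h => rpow_def_of_pos h y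
  rw [h2, E (x/(1-x)) _ (by positivity), E (1/(1-x)) _ (by positivity), E x _ hx, E (1-x) _ h1]
  have h3 : |1/(1-x)^2| = exp (log (1-x) * (-2)) := by
    rw [abs_of_pos (by positivity), ← Real.exp_log (show (0:ℝ) < 1/(1-x)^2 by positivity)]
    congr 1
    rw [one_div, Real.log_inv, ← Real.rpow_natCast (1-x) 2, Real.log_rpow h1]
    push_cast; ring
  rw [h3]
  simp only [← exp_add]
  congr 1
  rw [log_div hx.ne' h1.ne', one_div, log_inv]
  ring

lemma lintegral_betaPrime {a b : ℝ} (ha : 0 < a) (hb : 0 < b) :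
    ∫⁻ u in Ioi (0:ℝ), ENNReal.ofReal (u ^ (a-1) * (1+u) ^ (-(a+b)))
      = ENNReal.ofReal (Gamma a * Gamma b / Gamma (a+b)) := by
  have himg : (fun x : ℝ => x / (1 - x)) '' Ioo 0 1 = Ioi 0 := by
    ext u
    constructor
    · rintro ⟨x, hx, rfl⟩
      exact div_pos hx.1 (by linarith [hx.2])
    · intro hu
      have hu' : (0:ℝ) < u := hu
      refine ⟨u/(1+u), ⟨by positivity, by rw [div_lt_one (by positivity)]; linarith⟩, ?_⟩
      field_simp
      ring
  have hderiv : ∀ x ∈ Ioo (0:ℝ) 1, HasDerivWithinAt (fun x : ℝ => x / (1-x))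
      (1/(1-x)^2) (Ioo 0 1) x := by
    intro x hx
    have h1 : (1:ℝ) - x ≠ 0 := by have := hx.2; intro h; linarith [sub_eq_zero.mp h]
    have := (hasDerivAt_id' x).div ((hasDerivAt_const x (1:ℝ)).sub (hasDerivAt_id' x)) h1
    refine (this.congr_deriv ?_).hasDerivWithinAt
    simp only [Pi.sub_apply]
    ring
  have hinj : InjOn (fun x : ℝ => x / (1-x)) (Ioo 0 1) := by
    intro x hx y hy h
    dsimp at h
    rw [div_eq_div_iff (by linarith [hx.2] : (0:ℝ) < 1 - x).ne' (by linarith [hy.2] : (0:ℝ) < 1 - y).ne'] at h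
    nlinarith [h]
  rw [← himg, lintegral_image_eq_lintegral_abs_det_fderiv_mul volume measurableSet_Ioo
    (f' := fun x => (1 : ℝ →L[ℝ] ℝ).smulRight (1/(1-x)^2))
    (fun x hx => (hderiv x hx).hasFDerivWithinAt) hinj]
  simp only [show ∀ v : ℝ, ((1 : ℝ →L[ℝ] ℝ).smulRight v).det = v from
    fun v => ContinuousLinearMap.det_toSpanSingleton v]
  rw [setLIntegral_congr_fun measurableSet_Ioo
    (fun x hx => ?_), ← ofReal_integral_eq_lintegral_ofReal (betaReal_integrable ha hb) ?_,
    betaReal_value ha hb]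
  · exact (ae_restrict_iff' measurableSet_Ioo).mpr (Filter.Eventually.of_forall
      (fun x hx => mul_nonneg (Real.rpow_nonneg hx.1.le _)
        (Real.rpow_nonneg (by linarith [hx.2] : (0:ℝ) ≤ 1 - x) _)))
  · rw [← ENNReal.ofReal_mul (abs_nonneg _), key1 hx.1 hx.2]

lemma ofReal_indicator_swap {α : Type*} (S : Set α) (g : α → ℝ) (x : α) :
    ENNReal.ofReal (S.indicator g x) = S.indicator (fun y => ENNReal.ofReal (g y)) x := by
  by_cases h : x ∈ S <;> simp [h]

lemma hasFDerivAt_T {x : ℝ × ℝ} (hp : x.1 ≠ 0) (hq : x.2 ≠ 0) :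
    HasFDerivAt (fun x : ℝ×ℝ => ((1+x.2)/x.1, 1/x.2))
      (LinearMap.toContinuousLinearMap (Matrix.toLin (Module.Basis.finTwoProd ℝ) (Module.Basis.finTwoProd ℝ)
        !![-((1+x.2)/x.1^2), (x.1)⁻¹; 0, -(x.2^2)⁻¹])) x := by
  rw [Matrix.toLin_finTwoProd_toContinuousLinearMap]
  have h1 : HasFDerivAt (fun y : ℝ×ℝ => (1+y.2) * (y.1)⁻¹)
      ((1+x.2) • ((-(x.1^2)⁻¹) • ContinuousLinearMap.fst ℝ ℝ ℝ) +
        (x.1)⁻¹ • ContinuousLinearMap.snd ℝ ℝ ℝ) x :=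
    (hasFDerivAt_snd.const_add 1).mul ((hasDerivAt_inv hp).comp_hasFDerivAt x hasFDerivAt_fst)
  have h2 : HasFDerivAt (fun y : ℝ×ℝ => (y.2)⁻¹)
      ((-(x.2^2)⁻¹) • ContinuousLinearMap.snd ℝ ℝ ℝ) x :=
    (hasDerivAt_inv hq).comp_hasFDerivAt x hasFDerivAt_snd
  have hfe : (fun x : ℝ×ℝ => ((1+x.2)/x.1, 1/x.2))
      = fun y : ℝ×ℝ => ((1+y.2) * (y.1)⁻¹, (y.2)⁻¹) := by
    funext y; simp [div_eq_mul_inv]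
  rw [hfe]
  refine (h1.prodMk h2).congr_fderiv ?_
  refine ContinuousLinearMap.ext fun v => Prod.ext ?_ ?_ <;>
  · simp only [ContinuousLinearMap.prod_apply, ContinuousLinearMap.add_apply,
      ContinuousLinearMap.smul_apply, ContinuousLinearMap.coe_fst',
      ContinuousLinearMap.coe_snd', smul_eq_mul]
    ring

lemma key2 {p q c α₁ α₂ α₃ β₁ β₂ : ℝ} (hp : 0 < p) (hq : 0 < q) :
    |(1+q)/(p^2*q^2)| *
      (c * ((1+q)/p) ^ (α₂+α₃+β₁+β₂-1) * (1+(1+q)/p) ^ (-(α₂+α₃+β₁+β₂+α₁)) *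
        (1/q) ^ (α₃+β₂-1) * (1+1/q) ^ (-(α₃+β₂+α₂)))
      = c * p ^ (α₁-1) * q ^ (α₂-1) * (1+q) ^ β₁ * (1+p+q) ^ (-(α₁+α₂+α₃+β₁+β₂)) := by
  have hq1 : (0:ℝ) < 1+q := by linarith
  have hpq : (0:ℝ) < 1+p+q := by linarith
  have h2 : 1+(1+q)/p = (1+p+q)/p := by field_simp; ring
  have h3 : (1:ℝ)+1/q = (1+q)/q := by field_simp; ring
  have E : ∀ (t y : ℝ), 0 < t → t ^ y = exp (log t * y) := fun t y h => rpow_def_of_pos h y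
  have hA : |(1+q)/(p^2*q^2)| = exp (log (1+q) - (log p * 2 + log q * 2)) := by
    rw [abs_of_pos (by positivity), ← exp_log (show (0:ℝ) < (1+q)/(p^2*q^2) by positivity)]
    congr 1
    rw [log_div hq1.ne' (by positivity), log_mul (by positivity) (by positivity),
      ← Real.rpow_natCast p 2, ← Real.rpow_natCast q 2, log_rpow hp, log_rpow hq]
    push_cast; ring
  have main : |(1+q)/(p^2*q^2)| *
      (((1+q)/p) ^ (α₂+α₃+β₁+β₂-1) * ((1+p+q)/p) ^ (-(α₂+α₃+β₁+β₂+α₁)) *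
        (1/q) ^ (α₃+β₂-1) * ((1+q)/q) ^ (-(α₃+β₂+α₂)))
      = p ^ (α₁-1) * q ^ (α₂-1) * (1+q) ^ β₁ * (1+p+q) ^ (-(α₁+α₂+α₃+β₁+β₂)) := by
    rw [hA, E ((1+q)/p) _ (by positivity), E ((1+p+q)/p) _ (by positivity),
      E (1/q) _ (by positivity), E ((1+q)/q) _ (by positivity),
      E p _ hp, E q _ hq, E (1+q) _ hq1, E (1+p+q) _ hpq]
    simp only [← exp_add]
    congr 1
    rw [log_div hq1.ne' hp.ne', log_div hpq.ne' hp.ne', one_div, log_inv,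
      log_div hq1.ne' hq.ne']
    ring
  rw [h2, h3]
  linear_combination c * main

lemma prod_withDensity_ofReal {g₁ g₂ : ℝ → ℝ} (h₁ : Measurable g₁) (h₂ : Measurable g₂) :
    (volume.withDensity fun x => ENNReal.ofReal (g₁ x)).prod
      (volume.withDensity fun y => ENNReal.ofReal (g₂ y))
      = volume.withDensity fun p : ℝ×ℝ => ENNReal.ofReal (g₁ p.1) * ENNReal.ofReal (g₂ p.2) := by
  refine Measure.prod_eq fun s t hs ht => ?_
  rw [withDensity_apply _ (hs.prod ht), Measure.volume_eq_prod, ← Measure.prod_restrict,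
    lintegral_prod_mul h₁.ennreal_ofReal.aemeasurable h₂.ennreal_ofReal.aemeasurable,
    withDensity_apply _ hs, withDensity_apply _ ht]
/-- Scalar case (p = 1, k = 2) of Theorem 2.4: if `(X₁, X₂)` has joint density
proportional to `x₁^{α₁−1} x₂^{α₂−1} (1+x₂)^{β₁} (1+x₁+x₂)^{−(α₁+α₂+α₃+β₁+β₂)}` on
`(0,∞)²`, then `U₁ = (1+X₂)/X₁` and `U₂ = 1/X₂` are independent type-2 beta random
variables with parameters `(α₂+α₃+β₁+β₂, α₁)` and `(α₃+β₂, α₂)` respectively. -/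
theorem type2_dirichlet_to_betaPrime_indep {α₁ α₂ α₃ β₁ β₂ c : ℝ}
    (h₁ : 0 < α₁) (h₂ : 0 < α₂) (h₃ : 0 < α₂ + α₃ + β₁ + β₂) (h₄ : 0 < α₃ + β₂)
    (hc : 0 < c) (μ : Measure (ℝ × ℝ))
    (hμ : μ = volume.withDensity fun x => ENNReal.ofReal
      ((Ioi (0 : ℝ) ×ˢ Ioi (0 : ℝ)).indicator
        (fun x => c * x.1 ^ (α₁ - 1) * x.2 ^ (α₂ - 1) * (1 + x.2) ^ β₁ *
          (1 + x.1 + x.2) ^ (-(α₁ + α₂ + α₃ + β₁ + β₂))) x))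
    (hprob : IsProbabilityMeasure μ) :
    Measure.map (fun x : ℝ × ℝ => ((1 + x.2) / x.1, 1 / x.2)) μ =
      (betaPrimeMeasure (α₂ + α₃ + β₁ + β₂) α₁).prod (betaPrimeMeasure (α₃ + β₂) α₂) := by
  have hB₁ : (0:ℝ) < Gamma (α₂+α₃+β₁+β₂) * Gamma α₁ / Gamma (α₂+α₃+β₁+β₂+α₁) := by
    have g1 := Gamma_pos_of_pos h₃; have g2 := Gamma_pos_of_pos h₁
    have g3 := Gamma_pos_of_pos (show (0:ℝ) < α₂+α₃+β₁+β₂+α₁ by linarith)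
    positivity
  have hB₂ : (0:ℝ) < Gamma (α₃+β₂) * Gamma α₂ / Gamma (α₃+β₂+α₂) := by
    have g1 := Gamma_pos_of_pos h₄; have g2 := Gamma_pos_of_pos h₂
    have g3 := Gamma_pos_of_pos (show (0:ℝ) < α₃+β₂+α₂ by linarith)
    positivity
  have hT : Measurable (fun x : ℝ×ℝ => ((1+x.2)/x.1, 1/x.2)) := by fun_prop
  have hSm : MeasurableSet (Ioi (0:ℝ) ×ˢ Ioi (0:ℝ)) :=
    measurableSet_Ioi.prod measurableSet_Ioi
  have hinj : InjOn (fun x : ℝ×ℝ => ((1+x.2)/x.1, 1/x.2)) (Ioi (0:ℝ) ×ˢ Ioi (0:ℝ)) := by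
    intro x hx y hy h
    have hx1 : (0:ℝ) < x.1 := hx.1
    have hx2 : (0:ℝ) < x.2 := hx.2
    have hy1 : (0:ℝ) < y.1 := hy.1
    have hy2 : (0:ℝ) < y.2 := hy.2
    have hfst := congrArg Prod.fst h
    have hsnd := congrArg Prod.snd h
    dsimp at hfst hsnd
    have e2 : x.2 = y.2 := by
      field_simp at hsnd
      linarith
    have e1 : x.1 = y.1 := by
      rw [div_eq_div_iff hx1.ne' hy1.ne', e2] at hfst
      have h12 : (0:ℝ) < 1 + y.2 := by linarith
      have hcanc : y.1 = x.1 := by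
        have : (1+y.2) * y.1 = (1+y.2) * x.1 := by linarith [hfst]
        exact mul_left_cancel₀ h12.ne' this
      linarith
    exact Prod.ext e1 e2
  -- Step 1: change of variables
  have hmap : Measure.map (fun x : ℝ×ℝ => ((1+x.2)/x.1, 1/x.2)) μ
      = volume.withDensity fun u : ℝ×ℝ => ENNReal.ofReal
        ((Ioi (0:ℝ) ×ˢ Ioi (0:ℝ)).indicator (fun u =>
          c * u.1 ^ (α₂+α₃+β₁+β₂-1) * (1+u.1) ^ (-(α₂+α₃+β₁+β₂+α₁)) *
          u.2 ^ (α₃+β₂-1) * (1+u.2) ^ (-(α₃+β₂+α₂))) u) := by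
    ext A hA
    rw [Measure.map_apply hT hA, hμ, withDensity_apply _ (hT hA), withDensity_apply _ hA]
    simp_rw [ofReal_indicator_swap]
    rw [setLIntegral_indicator hSm, setLIntegral_indicator hSm]
    have hs' : MeasurableSet ((Ioi (0:ℝ) ×ˢ Ioi (0:ℝ)) ∩
        (fun x : ℝ×ℝ => ((1+x.2)/x.1, 1/x.2)) ⁻¹' A) := hSm.inter (hT hA)
    have himg : (fun x : ℝ×ℝ => ((1+x.2)/x.1, 1/x.2)) ''
        ((Ioi (0:ℝ) ×ˢ Ioi (0:ℝ)) ∩ (fun x : ℝ×ℝ => ((1+x.2)/x.1, 1/x.2)) ⁻¹' A)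
        = (Ioi (0:ℝ) ×ˢ Ioi (0:ℝ)) ∩ A := by
      ext u
      simp only [mem_image, mem_inter_iff, mem_preimage, mem_prod, mem_Ioi]
      constructor
      · rintro ⟨x, ⟨⟨hx1, hx2⟩, hxA⟩, rfl⟩
        exact ⟨⟨div_pos (by linarith) hx1, by positivity⟩, hxA⟩
      · rintro ⟨⟨hu1, hu2⟩, huA⟩
        have hu2' : (0:ℝ) < u.2 := hu2
        have hN := (show (0:ℝ) < 1 + 1/u.2 by positivity).ne'
        have hu1' := (show (0:ℝ) < u.1 from hu1).ne'
        have hTu : ((1 + 1/u.2)/((1+1/u.2)/u.1), 1/(1/u.2)) = u := by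
          refine Prod.ext ?_ (one_div_one_div u.2)
          dsimp only
          field_simp
        refine ⟨((1+1/u.2)/u.1, 1/u.2), ⟨⟨by positivity, by positivity⟩, ?_⟩, hTu⟩
        dsimp only
        rw [hTu]
        exact huA
    rw [← himg, lintegral_image_eq_lintegral_abs_det_fderiv_mul volume hs'
      (f' := fun x : ℝ×ℝ => LinearMap.toContinuousLinearMap
        (Matrix.toLin (Module.Basis.finTwoProd ℝ) (Module.Basis.finTwoProd ℝ)
          !![-((1+x.2)/x.1^2), (x.1)⁻¹; 0, -(x.2^2)⁻¹]))
      (fun x hx => (hasFDerivAt_T (ne_of_gt (hx.1.1 : (0:ℝ) < x.1))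
        (ne_of_gt (hx.1.2 : (0:ℝ) < x.2))).hasFDerivWithinAt)
      (hinj.mono inter_subset_left) _]
    refine setLIntegral_congr_fun hs' (fun x hx => ?_)
    have hp : (0:ℝ) < x.1 := hx.1.1
    have hq : (0:ℝ) < x.2 := hx.1.2
    have hdet : (LinearMap.toContinuousLinearMap
        (Matrix.toLin (Module.Basis.finTwoProd ℝ) (Module.Basis.finTwoProd ℝ)
          !![-((1+x.2)/x.1^2), (x.1)⁻¹; 0, -(x.2^2)⁻¹])).det
        = (1+x.2)/(x.1^2*x.2^2) := by
      simp only [LinearMap.det_toContinuousLinearMap, LinearMap.det_toLin,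
        Matrix.det_fin_two_of]
      ring
    dsimp only
    rw [hdet, ← ENNReal.ofReal_mul (abs_nonneg _)]
    exact (congrArg ENNReal.ofReal (key2 hp hq)).symm
  -- Step 2: the normalization constant
  have h1m : Measure.map (fun x : ℝ×ℝ => ((1+x.2)/x.1, 1/x.2)) μ Set.univ = 1 := by
    rw [Measure.map_apply hT MeasurableSet.univ, preimage_univ, measure_univ]
  rw [hmap, withDensity_apply _ MeasurableSet.univ, Measure.restrict_univ] at h1m
  have hmd₁ : Measurable fun t : ℝ =>
      c * (t ^ (α₂+α₃+β₁+β₂-1) * (1+t) ^ (-(α₂+α₃+β₁+β₂+α₁))) := by fun_prop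
  have hmd₂ : Measurable fun t : ℝ =>
      t ^ (α₃+β₂-1) * (1+t) ^ (-(α₃+β₂+α₂)) := by fun_prop
  have hsplit : ∀ u : ℝ×ℝ, ENNReal.ofReal
      ((Ioi (0:ℝ) ×ˢ Ioi (0:ℝ)).indicator (fun u =>
        c * u.1 ^ (α₂+α₃+β₁+β₂-1) * (1+u.1) ^ (-(α₂+α₃+β₁+β₂+α₁)) *
        u.2 ^ (α₃+β₂-1) * (1+u.2) ^ (-(α₃+β₂+α₂))) u)
      = ENNReal.ofReal ((Ioi (0:ℝ)).indicator
          (fun t => c * (t ^ (α₂+α₃+β₁+β₂-1) * (1+t) ^ (-(α₂+α₃+β₁+β₂+α₁)))) u.1)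
        * ENNReal.ofReal ((Ioi (0:ℝ)).indicator
          (fun t => t ^ (α₃+β₂-1) * (1+t) ^ (-(α₃+β₂+α₂))) u.2) := by
    intro u
    by_cases hu1 : u.1 ∈ Ioi (0:ℝ) <;> by_cases hu2 : u.2 ∈ Ioi (0:ℝ)
    · have hu1' : (0:ℝ) < u.1 := hu1
      have hu2' : (0:ℝ) < u.2 := hu2
      rw [indicator_of_mem (show u ∈ Ioi (0:ℝ) ×ˢ Ioi (0:ℝ) from ⟨hu1, hu2⟩),
        indicator_of_mem hu1, indicator_of_mem hu2,
        ← ENNReal.ofReal_mul (by positivity)]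
      congr 1
      ring
    · rw [indicator_of_notMem (show u ∉ Ioi (0:ℝ) ×ˢ Ioi (0:ℝ) from fun h => hu2 h.2),
        indicator_of_notMem hu2]
      simp
    · rw [indicator_of_notMem (show u ∉ Ioi (0:ℝ) ×ˢ Ioi (0:ℝ) from fun h => hu1 h.1),
        indicator_of_notMem hu1]
      simp
    · rw [indicator_of_notMem (show u ∉ Ioi (0:ℝ) ×ˢ Ioi (0:ℝ) from fun h => hu1 h.1),
        indicator_of_notMem hu1]
      simp
  simp_rw [hsplit] at h1m
  rw [Measure.volume_eq_prod, lintegral_prod_mul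
    (hmd₁.indicator measurableSet_Ioi).ennreal_ofReal.aemeasurable
    (hmd₂.indicator measurableSet_Ioi).ennreal_ofReal.aemeasurable] at h1m
  simp_rw [ofReal_indicator_swap] at h1m
  rw [lintegral_indicator measurableSet_Ioi, lintegral_indicator measurableSet_Ioi] at h1m
  have heq1 : ∫⁻ t in Ioi (0:ℝ), ENNReal.ofReal
      (c * (t ^ (α₂+α₃+β₁+β₂-1) * (1+t) ^ (-(α₂+α₃+β₁+β₂+α₁))))
      = ENNReal.ofReal c * ENNReal.ofReal
        (Gamma (α₂+α₃+β₁+β₂) * Gamma α₁ / Gamma (α₂+α₃+β₁+β₂+α₁)) := by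
    simp_rw [ENNReal.ofReal_mul hc.le]
    rw [lintegral_const_mul _ (by fun_prop : Measurable fun t : ℝ =>
      ENNReal.ofReal (t ^ (α₂+α₃+β₁+β₂-1) * (1+t) ^ (-(α₂+α₃+β₁+β₂+α₁)))),
      lintegral_betaPrime h₃ h₁]
  have heq2 : ∫⁻ t in Ioi (0:ℝ), ENNReal.ofReal
      (t ^ (α₃+β₂-1) * (1+t) ^ (-(α₃+β₂+α₂)))
      = ENNReal.ofReal (Gamma (α₃+β₂) * Gamma α₂ / Gamma (α₃+β₂+α₂)) :=
    lintegral_betaPrime h₄ h₂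
  rw [heq1, heq2, ← ENNReal.ofReal_mul hc.le, ← ENNReal.ofReal_mul (by positivity)] at h1m
  have hcB : c * (Gamma (α₂+α₃+β₁+β₂) * Gamma α₁ / Gamma (α₂+α₃+β₁+β₂+α₁)) *
      (Gamma (α₃+β₂) * Gamma α₂ / Gamma (α₃+β₂+α₂)) = 1 := ENNReal.ofReal_eq_one.mp h1m
  -- Step 3: identify with the product of beta prime measures
  rw [hmap]
  unfold betaPrimeMeasure
  rw [prod_withDensity_ofReal
    ((by fun_prop : Measurable fun u : ℝ => u ^ (α₂+α₃+β₁+β₂-1) *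
        (1+u) ^ (-(α₂+α₃+β₁+β₂+α₁)) /
        (Gamma (α₂+α₃+β₁+β₂) * Gamma α₁ / Gamma (α₂+α₃+β₁+β₂+α₁))).indicator
      measurableSet_Ioi)
    ((by fun_prop : Measurable fun u : ℝ => u ^ (α₃+β₂-1) * (1+u) ^ (-(α₃+β₂+α₂)) /
        (Gamma (α₃+β₂) * Gamma α₂ / Gamma (α₃+β₂+α₂))).indicator
      measurableSet_Ioi)]
  congr 1
  funext u
  by_cases hu1 : u.1 ∈ Ioi (0:ℝ) <;> by_cases hu2 : u.2 ∈ Ioi (0:ℝ)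
  · have hu1' : (0:ℝ) < u.1 := hu1
    have hu2' : (0:ℝ) < u.2 := hu2
    rw [indicator_of_mem (show u ∈ Ioi (0:ℝ) ×ˢ Ioi (0:ℝ) from ⟨hu1, hu2⟩),
      indicator_of_mem hu1, indicator_of_mem hu2,
      ← ENNReal.ofReal_mul (div_nonneg (by positivity) hB₁.le)]
    congr 1
    rw [div_mul_div_comm, eq_comm, div_eq_iff (by positivity)]
    linear_combination (-(u.1 ^ (α₂+α₃+β₁+β₂-1) * (1+u.1) ^ (-(α₂+α₃+β₁+β₂+α₁)) *
      (u.2 ^ (α₃+β₂-1) * (1+u.2) ^ (-(α₃+β₂+α₂))))) * hcB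
  · rw [indicator_of_notMem (show u ∉ Ioi (0:ℝ) ×ˢ Ioi (0:ℝ) from fun h => hu2 h.2),
      indicator_of_notMem hu2]
    simp
  · rw [indicator_of_notMem (show u ∉ Ioi (0:ℝ) ×ˢ Ioi (0:ℝ) from fun h => hu1 h.1),
      indicator_of_notMem hu1]
    simp
  · rw [indicator_of_notMem (show u ∉ Ioi (0:ℝ) ×ˢ Ioi (0:ℝ) from fun h => hu1 h.1),
      indicator_of_notMem hu1]
    simp
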